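/- arXiv:2602.08026 — 3 statements merged into one kernel-verified Lean document; each statement's English description precedes it below -/
import Mathlib

section
/- (ES actions stay in the span of the initialisation.) Run linear ensemble sampling on the action set X = B^d with any initial vectors ζ^1,…,ζ^m ∈ ℝ^d and any parameters γ̄, λ > 0, using the tie-breaking rule X_t = θ_t/‖θ_t‖ if θ_t ≠ 0 and X_t = 0 if θ_t = 0. Let U = span{ζ^1,…,ζ^m}. Then for every t ≥ 1, X_t ∈ U almost surely. -/
open MeasureTheory ProbabilityTheory Matrix

noncomputable section

/-- Euclidean norm of a vector in `Fin d → ℝ`. -/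
def euclNorm {d : ℕ} (x : Fin d → ℝ) : ℝ := Real.sqrt (x ⬝ᵥ x)

/-- Weighted norm `‖x‖_A = √(xᵀ A x)`. -/
def wnorm {d : ℕ} (A : Matrix (Fin d) (Fin d) ℝ) (x : Fin d → ℝ) : ℝ :=
  Real.sqrt (x ⬝ᵥ A.mulVec x)

/-- The standard Gaussian measure on `Fin d → ℝ` (i.i.d. `N(0,1)` coordinates). -/
def stdGaussianVec (d : ℕ) : Measure (Fin d → ℝ) := Measure.pi fun _ => gaussianReal 0 1

/-- Data of a run of linear ensemble sampling: the underlying probability space, the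
parameters, and all the stochastic processes involved. -/
structure ESData (Ω : Type) [MeasurableSpace Ω] (d m : ℕ) where
  /-- the underlying probability measure -/
  P : Measure Ω
  /-- regularisation parameter λ -/
  lam : ℝ
  /-- inflation parameter γ̄ -/
  gam : ℝ
  /-- confidence parameter δ (used in the radius β) -/
  del : ℝ
  /-- the action set -/
  Xset : Set (Fin d → ℝ)
  /-- the unknown parameter θ⋆ -/
  thetaStar : Fin d → ℝ
  /-- prior perturbations ζ¹,…,ζᵐ -/
  zeta : Fin m → Ω → (Fin d → ℝ)
  /-- reward perturbations ξ_t^j, t ≥ 1 -/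
  xi : ℕ → Fin m → Ω → ℝ
  /-- uniformly chosen indices J_t, t ≥ 1 -/
  J : ℕ → Ω → Fin m
  /-- actions X_t, t ≥ 1 -/
  act : ℕ → Ω → (Fin d → ℝ)
  /-- rewards Y_t, t ≥ 1 -/
  Y : ℕ → Ω → ℝ
  /-- filtration: `F t` records everything realized through the end of round `t`
  (with `F 0` recording the initial draws ζ¹,…,ζᵐ) -/
  F : ℕ → MeasurableSpace Ω

namespace ESData

variable {Ω : Type} [MeasurableSpace Ω] {d m : ℕ} (A : ESData Ω d m)

/-- Design matrix `V_t = λ I + ∑_{s=1}^t X_s X_sᵀ`. -/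
def V (t : ℕ) (ω : Ω) : Matrix (Fin d) (Fin d) ℝ :=
  A.lam • (1 : Matrix (Fin d) (Fin d) ℝ) +
    ∑ s ∈ Finset.Icc 1 t, vecMulVec (A.act s ω) (A.act s ω)

/-- Perturbation accumulator `S_t^j = √λ ζ^j + ∑_{s=1}^t ξ_s^j X_s`. -/
def S (j : Fin m) (t : ℕ) (ω : Ω) : Fin d → ℝ :=
  Real.sqrt A.lam • A.zeta j ω + ∑ s ∈ Finset.Icc 1 t, A.xi s j ω • A.act s ω

/-- Ridge regression estimate `θ̂_t = V_t⁻¹ ∑_{s=1}^t Y_s X_s`. -/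
def thetaHat (t : ℕ) (ω : Ω) : Fin d → ℝ :=
  (A.V t ω)⁻¹ *ᵥ ∑ s ∈ Finset.Icc 1 t, A.Y s ω • A.act s ω

/-- Confidence radius `β_t^δ = √λ + √(2 log (1/δ) + log (det V_t / λ^d))`. -/
def beta (t : ℕ) (ω : Ω) : ℝ :=
  Real.sqrt A.lam +
    Real.sqrt (2 * Real.log (1 / A.del) + Real.log ((A.V t ω).det / A.lam ^ d))

/-- Ensemble model parameters `θ_t^j = θ̂_t + γ̄ β_t^δ V_t⁻¹ S_t^j`. -/
def theta (j : Fin m) (t : ℕ) (ω : Ω) : Fin d → ℝ :=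
  A.thetaHat t ω + (A.gam * A.beta t ω) • ((A.V t ω)⁻¹ *ᵥ A.S j t ω)

/-- Reward noise `η_t = Y_t − ⟨X_t, θ⋆⟩`. -/
def eta (t : ℕ) (ω : Ω) : ℝ := A.Y t ω - A.act t ω ⬝ᵥ A.thetaStar

/-- The σ-algebra of everything realized up to and including the choice of `X_t`:
the past through round `t-1` together with the fresh index `J_t` (which determines `X_t`). -/
def G (t : ℕ) : MeasurableSpace Ω :=
  A.F (t - 1) ⊔ MeasurableSpace.comap (A.J t) inferInstance

/-- `n`-step regret `R_n = max_{x⋆ ∈ X} ∑_{t=1}^n ⟨x⋆ − X_t, θ⋆⟩`. -/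
def regret (n : ℕ) (ω : Ω) : ℝ :=
  ⨆ x ∈ A.Xset, ∑ t ∈ Finset.Icc 1 n, (x - A.act t ω) ⬝ᵥ A.thetaStar

/-- Exceedance frequency `E_{t,m}(u,c) = m⁻¹ ∑_j 1{⟨u, S_{t−1}^j⟩ / ‖u‖_{V_{t−1}} ≥ c}`. -/
def exFreq (t : ℕ) (u : Fin d → ℝ) (c : ℝ) (ω : Ω) : ℝ :=
  (m : ℝ)⁻¹ * ∑ j : Fin m,
    if c ≤ (u ⬝ᵥ A.S j (t - 1) ω) / wnorm (A.V (t - 1) ω) u then 1 else 0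

/-- The term `γ_t^δ = √d + √(log(4m/δ)) + √(2 log(4m/δ) + d log(1 + t/(λd)))`,
for a confidence parameter `δ`. -/
def gammaConf (δ : ℝ) (t : ℕ) : ℝ :=
  Real.sqrt d + Real.sqrt (Real.log (4 * m / δ)) +
    Real.sqrt (2 * Real.log (4 * m / δ) + d * Real.log (1 + t / (A.lam * d)))

/-- The algorithmic part of linear ensemble sampling: the randomization used by the
algorithm has the prescribed distributions, all fresh draws are independent of the past,
and the actions are selected by maximizing the predicted reward of the sampled model. -/
structure IsESBase : Prop where
  prob : IsProbabilityMeasure A.P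
  lam_pos : 0 < A.lam
  gam_pos : 0 < A.gam
  del_mem : A.del ∈ Set.Ioo (0 : ℝ) 1
  -- filtration structure
  F_le : ∀ t, A.F t ≤ ‹MeasurableSpace Ω›
  F_mono : Monotone A.F
  zeta_meas : ∀ j, Measurable[A.F 0] (A.zeta j)
  xi_meas : ∀ t, 1 ≤ t → ∀ j, Measurable[A.F t] (A.xi t j)
  J_meas : ∀ t, 1 ≤ t → Measurable[A.F t] (A.J t)
  act_meas : ∀ t, 1 ≤ t → Measurable[A.F t] (A.act t)
  Y_meas : ∀ t, 1 ≤ t → Measurable[A.F t] (A.Y t)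
  -- laws of the algorithm's random draws
  xi_law : ∀ t, 1 ≤ t → ∀ j, Measure.map (A.xi t j) A.P = gaussianReal 0 1
  xi_indep : ∀ t, 1 ≤ t → iIndepFun (fun j => A.xi t j) A.P
  J_law : ∀ t, 1 ≤ t → ∀ j, A.P {ω | A.J t ω = j} = (m : ENNReal)⁻¹
  -- freshness: the draws `(ξ_t^1,…,ξ_t^m, J_t)` of round `t` are independent of the past
  fresh : ∀ t, 1 ≤ t →
    Indep (MeasurableSpace.comap (fun ω => ((fun j => A.xi t j ω), A.J t ω)) inferInstance)
      (A.F (t - 1)) A.P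
  -- the fresh index `J_t` is independent of the fresh perturbations `(ξ_t^j)_j`
  xiJ_indep : ∀ t, 1 ≤ t → IndepFun (fun ω (j : Fin m) => A.xi t j ω) (A.J t) A.P
  -- the action `X_t` is determined by the past and `J_t`, and maximizes `⟨x, θ_{t−1}^{J_t}⟩`
  act_adapted : ∀ t, 1 ≤ t → Measurable[A.G t] (A.act t)
  act_mem : ∀ t, 1 ≤ t → ∀ ω, A.act t ω ∈ A.Xset
  act_argmax : ∀ t, 1 ≤ t → ∀ ω, ∀ x ∈ A.Xset,
    x ⬝ᵥ A.theta (A.J t ω) (t - 1) ω ≤ A.act t ω ⬝ᵥ A.theta (A.J t ω) (t - 1) ω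

/-- A full run of linear ensemble sampling with prior distribution `P₀` for the `ζ^j`,
against a stochastic linear bandit environment: the action set is a closed subset of the
unit ball, `θ⋆` lies in the unit ball, and the reward noise is conditionally 1-subgaussian
given the past (including the action of the current round). -/
structure IsES (P₀ : Measure (Fin d → ℝ)) extends IsESBase A : Prop where
  closedX : IsClosed A.Xset
  ballX : ∀ x ∈ A.Xset, euclNorm x ≤ 1
  ballTheta : euclNorm A.thetaStar ≤ 1
  zeta_law : ∀ j, Measure.map (A.zeta j) A.P = P₀
  zeta_indep : iIndepFun A.zeta A.P
  noise_subg : ∀ t, 1 ≤ t → ∀ s : ℝ,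
    (A.P[fun ω => Real.exp (s * A.eta t ω)|A.G t]) ≤ᵐ[A.P] fun _ => Real.exp (s ^ 2 / 2)

/-- Linear ensemble sampling with standard Gaussian prior. -/
def IsGaussianES : Prop := A.IsES (stdGaussianVec d)

/-- The tie-breaking rule on the unit ball: play `θ_t/‖θ_t‖` if `θ_t ≠ 0`, else play `0`. -/
def TieBreak : Prop :=
  ∀ t, 1 ≤ t → ∀ ω,
    (A.theta (A.J t ω) (t - 1) ω = 0 → A.act t ω = 0) ∧
    (A.theta (A.J t ω) (t - 1) ω ≠ 0 →
      A.act t ω = (euclNorm (A.theta (A.J t ω) (t - 1) ω))⁻¹ • A.theta (A.J t ω) (t - 1) ω)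

end ESData


lemma sum_mulVec' {d : ℕ} {ι : Type*} (s : Finset ι) (f : ι → Matrix (Fin d) (Fin d) ℝ)
    (u : Fin d → ℝ) : (∑ i ∈ s, f i) *ᵥ u = ∑ i ∈ s, f i *ᵥ u := by
  classical
  induction s using Finset.cons_induction with
  | empty => simp [Matrix.mulVec, dotProduct]
  | cons a s ha ih => rw [Finset.sum_cons, Finset.sum_cons, Matrix.add_mulVec, ih]

lemma vecMulVec_mulVec' {d : ℕ} (v w u : Fin d → ℝ) :
    Matrix.vecMulVec v w *ᵥ u = (w ⬝ᵥ u) • v := by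
  ext i
  simp [Matrix.mulVec, Matrix.vecMulVec, dotProduct, Finset.mul_sum, mul_comm,
    mul_left_comm]

lemma posSemidef_vecMulVec' {d : ℕ} (v : Fin d → ℝ) : (Matrix.vecMulVec v v).PosSemidef := by
  rw [Matrix.posSemidef_iff_dotProduct_mulVec]
  constructor
  · ext i j
    simp [Matrix.vecMulVec, Matrix.conjTranspose_apply, mul_comm]
  · intro x
    simp only [vecMulVec_mulVec', dotProduct_smul, star_trivial, smul_eq_mul]
    rw [dotProduct_comm]
    exact mul_self_nonneg _

lemma smul_one_posDef {d : ℕ} {l : ℝ} (hl : 0 < l) :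
    (l • (1 : Matrix (Fin d) (Fin d) ℝ)).PosDef := by
  rw [Matrix.smul_one_eq_diagonal]
  exact Matrix.PosDef.diagonal fun _ => hl

lemma inv_mulVec_mem {d : ℕ} {M : Matrix (Fin d) (Fin d) ℝ} (hM : M.PosDef)
    {U : Submodule ℝ (Fin d → ℝ)} (hmap : ∀ u ∈ U, M *ᵥ u ∈ U) :
    ∀ u ∈ U, M⁻¹ *ᵥ u ∈ U := by
  have hdet : IsUnit M.det := hM.det_pos.ne'.isUnit
  have hinv : M⁻¹ * M = 1 := Matrix.nonsing_inv_mul M hdet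
  let f : U →ₗ[ℝ] U := M.mulVecLin.restrict fun u hu => hmap u hu
  have hinj : Function.Injective f := by
    intro a b hab
    have h1 : M *ᵥ (a : Fin d → ℝ) = M *ᵥ (b : Fin d → ℝ) := congrArg Subtype.val hab
    have h2 : M⁻¹ *ᵥ (M *ᵥ (a : Fin d → ℝ)) = M⁻¹ *ᵥ (M *ᵥ (b : Fin d → ℝ)) := by rw [h1]
    rw [Matrix.mulVec_mulVec, Matrix.mulVec_mulVec, hinv, Matrix.one_mulVec,
      Matrix.one_mulVec] at h2
    exact Subtype.ext h2
  have hsurj : Function.Surjective f := LinearMap.injective_iff_surjective.mp hinj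
  intro u hu
  obtain ⟨w, hw⟩ := hsurj ⟨u, hu⟩
  have hw' : M *ᵥ (w : Fin d → ℝ) = u := congrArg Subtype.val hw
  have : M⁻¹ *ᵥ u = (w : Fin d → ℝ) := by
    rw [← hw', Matrix.mulVec_mulVec, hinv, Matrix.one_mulVec]
  rw [this]; exact w.2

/-- **Ensemble sampling actions stay in the span of the initialisation.**
Run linear ensemble sampling on the action set `X = B^d` with any initial vectors
`ζ¹,…,ζᵐ ∈ ℝ^d`, arbitrary rewards, and any parameters `γ̄, λ > 0`, using the tie-breaking
rule `X_t = θ_t/‖θ_t‖` if `θ_t ≠ 0` and `X_t = 0` if `θ_t = 0`. Let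
`U = span{ζ¹,…,ζᵐ}`. Then for every `t ≥ 1`, `X_t ∈ U` almost surely. -/
theorem es_actions_in_span
    (Ω : Type) (_ : MeasurableSpace Ω) (d m : ℕ) (A : ESData Ω d m)
    (hES : A.IsESBase)
    (hX : A.Xset = {x | euclNorm x ≤ 1})
    (htie : A.TieBreak) :
    ∀ t : ℕ, 1 ≤ t →
      ∀ᵐ ω ∂A.P,
        A.act t ω ∈ Submodule.span ℝ (Set.range fun j : Fin m => A.zeta j ω) := by
  have key : ∀ T : ℕ, ∀ ω : Ω, ∀ s, 1 ≤ s → s ≤ T →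
      A.act s ω ∈ Submodule.span ℝ (Set.range fun j : Fin m => A.zeta j ω) := by
    intro T
    induction T with
    | zero => intro ω s hs hsT; omega
    | succ T ih =>
      intro ω s hs hsT
      rcases Nat.lt_or_ge s (T + 1) with h | h
      · exact ih ω s hs (by omega)
      set U := Submodule.span ℝ (Set.range fun j : Fin m => A.zeta j ω) with hU
      have hacts : ∀ r, 1 ≤ r → r ≤ T → A.act r ω ∈ U := fun r h1 h2 => ih ω r h1 h2
      have hr : s - 1 = T := by omega
      have hVpd : (A.V T ω).PosDef := by
        unfold ESData.V
        apply Matrix.PosDef.add_posSemidef (smul_one_posDef hES.lam_pos)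
        exact Finset.sum_induction _ _ (fun a b ha hb => ha.add hb) Matrix.PosSemidef.zero
          (fun r _ => posSemidef_vecMulVec' _)
      have hVmap : ∀ u ∈ U, A.V T ω *ᵥ u ∈ U := by
        intro u hu
        unfold ESData.V
        rw [Matrix.add_mulVec, sum_mulVec']
        refine Submodule.add_mem _ ?_ (Submodule.sum_mem _ fun r hrr => ?_)
        · rw [Matrix.smul_mulVec, Matrix.one_mulVec]
          exact Submodule.smul_mem _ _ hu
        · rw [vecMulVec_mulVec']
          exact Submodule.smul_mem _ _
            (hacts r (Finset.mem_Icc.mp hrr).1 (Finset.mem_Icc.mp hrr).2)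
      have hzeta : ∀ j, A.zeta j ω ∈ U := fun j => Submodule.subset_span ⟨j, rfl⟩
      have hS : ∀ j : Fin m, A.S j T ω ∈ U := by
        intro j
        unfold ESData.S
        exact Submodule.add_mem _ (Submodule.smul_mem _ _ (hzeta j))
          (Submodule.sum_mem _ fun r hrr => Submodule.smul_mem _ _
            (hacts r (Finset.mem_Icc.mp hrr).1 (Finset.mem_Icc.mp hrr).2))
      have hth : ∀ j : Fin m, A.theta j T ω ∈ U := by
        intro j
        unfold ESData.theta ESData.thetaHat
        refine Submodule.add_mem _ ?_ (Submodule.smul_mem _ _ ?_)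
        · exact inv_mulVec_mem hVpd hVmap _ (Submodule.sum_mem _ fun r hrr =>
            Submodule.smul_mem _ _
              (hacts r (Finset.mem_Icc.mp hrr).1 (Finset.mem_Icc.mp hrr).2))
        · exact inv_mulVec_mem hVpd hVmap _ (hS j)
      obtain ⟨h0, hne⟩ := htie s hs ω
      by_cases hz : A.theta (A.J s ω) (s - 1) ω = 0
      · rw [h0 hz]; exact Submodule.zero_mem _
      · rw [hne hz, hr]
        exact Submodule.smul_mem _ _ (hth _)
  intro t ht
  exact ae_of_all _ fun ω => key t ω t ht le_rfl
end
end

section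
/- Let U ⊆ ℝ^d be a deterministic linear subspace with dim(U) = k ≤ d/2, and let V be a random vector distributed uniformly on the Euclidean unit sphere S^{d−1} of ℝ^d. Let Π_U denote the orthogonal projection onto U. Then P( ‖Π_U V‖² ≤ 1/2 ) ≥ 1/2. -/
open MeasureTheory ProbabilityTheory

noncomputable section

set_option maxHeartbeats 1000000 in
/-- Let `U ⊆ ℝ^d` be a deterministic linear subspace with `dim U = k ≤ d/2`, and let `V` be a
random vector distributed uniformly on the Euclidean unit sphere `S^{d−1}` (i.e. its law is a
probability measure concentrated on the sphere and invariant under every linear isometry).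
Then `P(‖Π_U V‖² ≤ 1/2) ≥ 1/2`, where `Π_U` is the orthogonal projection onto `U`. -/
theorem proj_of_uniform_sphere_small
    (d k : ℕ) (Ω : Type) (_ : MeasurableSpace Ω) (P : Measure Ω)
    (hP : IsProbabilityMeasure P)
    (U : Submodule ℝ (EuclideanSpace ℝ (Fin d)))
    (hdim : Module.finrank ℝ U = k) (hk : 2 * k ≤ d)
    (V : Ω → EuclideanSpace ℝ (Fin d)) (hVmeas : Measurable V)
    (hsphere : ∀ᵐ ω ∂P, ‖V ω‖ = 1)
    (hrotinv : ∀ O : EuclideanSpace ℝ (Fin d) ≃ₗᵢ[ℝ] EuclideanSpace ℝ (Fin d),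
      Measure.map (fun ω => O (V ω)) P = Measure.map V P) :
    (1 / 2 : ENNReal) ≤
      P {ω | ‖(U.orthogonalProjectionOnto (V ω) : EuclideanSpace ℝ (Fin d))‖ ^ 2 ≤ 1 / 2} := by
  classical
  -- dimension of the orthogonal complement
  have hdE : Module.finrank ℝ (EuclideanSpace ℝ (Fin d)) = d := by
    simp [finrank_euclideanSpace]
  have hUc : k ≤ Module.finrank ℝ ↥Uᗮ := by
    have h := Submodule.finrank_add_finrank_orthogonal (K := U)
    rw [hdim, hdE] at h
    omega
  -- an orthonormal family of size k inside Uᗮ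
  let b := stdOrthonormalBasis ℝ ↥Uᗮ
  let f : Fin k → (EuclideanSpace ℝ (Fin d)) := fun i => ((b (Fin.castLE hUc i) : ↥Uᗮ) : (EuclideanSpace ℝ (Fin d)))
  have hf : Orthonormal ℝ f := by
    have h1 : Orthonormal ℝ (fun i : Fin k => b (Fin.castLE hUc i)) :=
      b.orthonormal.comp _ (Fin.castLE_injective hUc)
    exact h1.comp_linearIsometry Uᗮ.subtypeₗᵢ
  set W : Submodule ℝ (EuclideanSpace ℝ (Fin d)) := Submodule.span ℝ (Set.range f) with hW
  have hWle : W ≤ Uᗮ := by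
    rw [hW, Submodule.span_le]
    rintro x ⟨i, rfl⟩
    exact (b (Fin.castLE hUc i)).2
  have hWdim : Module.finrank ℝ ↥W = k := by
    rw [hW, finrank_span_eq_card hf.linearIndependent, Fintype.card_fin]
  -- isometry from U onto W
  let bU : OrthonormalBasis (Fin k) ℝ ↥U := (stdOrthonormalBasis ℝ ↥U).reindex (finCongr hdim)
  let bW : OrthonormalBasis (Fin k) ℝ ↥W := (stdOrthonormalBasis ℝ ↥W).reindex (finCongr hWdim)
  let e : ↥U ≃ₗᵢ[ℝ] ↥W := bU.repr.trans bW.repr.symm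
  let L : ↥U →ₗᵢ[ℝ] (EuclideanSpace ℝ (Fin d)) := W.subtypeₗᵢ.comp e.toLinearIsometry
  let O₀ : (EuclideanSpace ℝ (Fin d)) →ₗᵢ[ℝ] (EuclideanSpace ℝ (Fin d)) := L.extend
  have hO₀surj : Function.Surjective O₀ := by
    have hinj : Function.Injective O₀.toLinearMap := O₀.injective
    exact (LinearMap.injective_iff_surjective).1 hinj
  let O : (EuclideanSpace ℝ (Fin d)) ≃ₗᵢ[ℝ] (EuclideanSpace ℝ (Fin d)) := LinearIsometryEquiv.ofSurjective O₀ hO₀surj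
  have hOcoe : ⇑O = ⇑O₀ := LinearIsometryEquiv.coe_ofSurjective O₀ hO₀surj
  -- the image of U under O
  set W' : Submodule ℝ (EuclideanSpace ℝ (Fin d)) := U.map (O.toLinearEquiv : (EuclideanSpace ℝ (Fin d)) →ₗ[ℝ] (EuclideanSpace ℝ (Fin d))) with hW'
  have hW'le : W' ≤ Uᗮ := by
    rintro x ⟨u, hu, rfl⟩
    have : O u = L ⟨u, hu⟩ := by
      rw [hOcoe]
      exact L.extend_apply ⟨u, hu⟩
    show O u ∈ Uᗮ
    rw [this]
    exact hWle (e ⟨u, hu⟩).2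
  -- norms of projections
  have hnorm : ∀ x : (EuclideanSpace ℝ (Fin d)),
      ‖(Submodule.orthogonalProjectionOnto W' x : (EuclideanSpace ℝ (Fin d)))‖ = ‖(Submodule.orthogonalProjectionOnto U (O.symm x) : (EuclideanSpace ℝ (Fin d)))‖ := by
    intro x
    rw [← Submodule.starProjection_apply, ← Submodule.starProjection_apply]
    erw [Submodule.starProjection_map_apply O U x]
    exact O.norm_map _
  -- key pointwise dichotomy
  have key : ∀ x : (EuclideanSpace ℝ (Fin d)), ‖x‖ = 1 →
      ‖(Submodule.orthogonalProjectionOnto U x : (EuclideanSpace ℝ (Fin d)))‖ ^ 2 ≤ 1 / 2 ∨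
      ‖(Submodule.orthogonalProjectionOnto W' x : (EuclideanSpace ℝ (Fin d)))‖ ^ 2 ≤ 1 / 2 := by
    intro x hx
    have hpyth : ‖x‖ ^ 2 = ‖(Submodule.orthogonalProjectionOnto U x : (EuclideanSpace ℝ (Fin d)))‖ ^ 2 +
        ‖(Submodule.orthogonalProjectionOnto Uᗮ x : (EuclideanSpace ℝ (Fin d)))‖ ^ 2 := by
      simpa using Submodule.norm_sq_eq_add_norm_sq_projection x U
    have hle : ‖(Submodule.orthogonalProjectionOnto W' x : (EuclideanSpace ℝ (Fin d)))‖ ≤ ‖(Submodule.orthogonalProjectionOnto Uᗮ x : (EuclideanSpace ℝ (Fin d)))‖ := by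
      have h1 : Submodule.orthogonalProjectionOnto W' ((Submodule.orthogonalProjectionOnto Uᗮ x : (EuclideanSpace ℝ (Fin d)))) =
          Submodule.orthogonalProjectionOnto W' x := by rw [← Submodule.starProjection_apply]; exact Submodule.orthogonalProjectionOnto_starProjection_of_le hW'le x
      calc ‖(Submodule.orthogonalProjectionOnto W' x : (EuclideanSpace ℝ (Fin d)))‖
          = ‖(Submodule.orthogonalProjectionOnto W' ((Submodule.orthogonalProjectionOnto Uᗮ x : (EuclideanSpace ℝ (Fin d)))) : (EuclideanSpace ℝ (Fin d)))‖ := by rw [h1]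
        _ ≤ ‖(Submodule.orthogonalProjectionOnto Uᗮ x : (EuclideanSpace ℝ (Fin d)))‖ := by
            rw [← Submodule.coe_norm]
            calc ‖Submodule.orthogonalProjectionOnto W' ((Submodule.orthogonalProjectionOnto Uᗮ x : (EuclideanSpace ℝ (Fin d))))‖
                ≤ ‖Submodule.orthogonalProjectionOnto W'‖ * ‖(Submodule.orthogonalProjectionOnto Uᗮ x : (EuclideanSpace ℝ (Fin d)))‖ :=
                  (Submodule.orthogonalProjectionOnto W').le_opNorm _
              _ ≤ 1 * ‖(Submodule.orthogonalProjectionOnto Uᗮ x : (EuclideanSpace ℝ (Fin d)))‖ :=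
                  mul_le_mul_of_nonneg_right (Submodule.orthogonalProjectionOnto_norm_le W') (norm_nonneg _)
              _ = ‖(Submodule.orthogonalProjectionOnto Uᗮ x : (EuclideanSpace ℝ (Fin d)))‖ := one_mul _
    have hle2 : ‖(Submodule.orthogonalProjectionOnto W' x : (EuclideanSpace ℝ (Fin d)))‖ ^ 2 ≤
        ‖(Submodule.orthogonalProjectionOnto Uᗮ x : (EuclideanSpace ℝ (Fin d)))‖ ^ 2 := by
      have h0 := norm_nonneg ((Submodule.orthogonalProjectionOnto W' x : (EuclideanSpace ℝ (Fin d))))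
      nlinarith
    have hsum : ‖(Submodule.orthogonalProjectionOnto U x : (EuclideanSpace ℝ (Fin d)))‖ ^ 2 +
        ‖(Submodule.orthogonalProjectionOnto W' x : (EuclideanSpace ℝ (Fin d)))‖ ^ 2 ≤ 1 := by
      rw [hx] at hpyth
      nlinarith
    rcases le_or_gt (‖(Submodule.orthogonalProjectionOnto U x : (EuclideanSpace ℝ (Fin d)))‖ ^ 2) (1 / 2) with h | h
    · exact Or.inl h
    · right; linarith
  -- measurable sets
  have contP : ∀ K : Submodule ℝ (EuclideanSpace ℝ (Fin d)), Continuous fun v : (EuclideanSpace ℝ (Fin d)) => ‖(Submodule.orthogonalProjectionOnto K v : (EuclideanSpace ℝ (Fin d)))‖ ^ 2 :=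
    fun K => ((continuous_subtype_val.comp (Submodule.orthogonalProjectionOnto K).continuous).norm.pow 2)
  set SU : Set (EuclideanSpace ℝ (Fin d)) := {v | ‖(Submodule.orthogonalProjectionOnto U v : (EuclideanSpace ℝ (Fin d)))‖ ^ 2 ≤ 1 / 2} with hSU
  set SW : Set (EuclideanSpace ℝ (Fin d)) := {v | ‖(Submodule.orthogonalProjectionOnto W' v : (EuclideanSpace ℝ (Fin d)))‖ ^ 2 ≤ 1 / 2} with hSW
  have mSU : MeasurableSet SU := measurableSet_le (contP U).measurable measurable_const
  have mSW : MeasurableSet SW := measurableSet_le (contP W').measurable measurable_const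
  set A : Set Ω := V ⁻¹' SU with hA
  set B : Set Ω := V ⁻¹' SW with hB
  have mA : MeasurableSet A := hVmeas mSU
  have mB : MeasurableSet B := hVmeas mSW
  -- a.e. union
  have hunion : ∀ᵐ ω ∂P, ω ∈ A ∪ B := by
    filter_upwards [hsphere] with ω hω
    rcases key (V ω) hω with h | h
    · exact Or.inl h
    · exact Or.inr h
  have hPunion : P (A ∪ B) = 1 := by
    have heq : (A ∪ B : Set Ω) =ᵐ[P] (Set.univ : Set Ω) :=
      Filter.eventuallyEq_univ.2 hunion
    rw [measure_congr heq, measure_univ]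
  -- P B = P A
  have hBA : P B = P A := by
    have h1 : P B = Measure.map V P SW := (Measure.map_apply hVmeas mSW).symm
    rw [h1, ← hrotinv O]
    have hOVmeas : Measurable fun ω => O (V ω) :=
      (O.continuous.measurable).comp hVmeas
    rw [Measure.map_apply hOVmeas mSW]
    congr 1
    ext ω
    simp only [Set.mem_preimage, hSW, Set.mem_setOf_eq, hA, hSU]
    rw [hnorm (O (V ω)), O.symm_apply_apply]
  -- conclude
  have hfinal : (1 : ENNReal) ≤ P A + P A := by
    calc (1 : ENNReal) = P (A ∪ B) := hPunion.symm
      _ ≤ P A + P B := measure_union_le A B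
      _ = P A + P A := by rw [hBA]
  have h2 : (1 : ENNReal) ≤ P A * 2 := by
    rw [mul_two]
    exact hfinal
  exact ENNReal.div_le_of_le_mul' (by rw [mul_comm]; exact h2)
end
end

section
/- Let U be a random linear subspace of ℝ^d (a measurable assignment ω ↦ U(ω), e.g. given by a measurable family of orthogonal projection matrices Π_{U(ω)}) satisfying dim(U) ≤ d/2 almost surely. Then there exists a deterministic θ⋆ on the Euclidean unit sphere S^{d−1} such that P( ‖Π_U θ⋆‖² ≤ 1/2 ) ≥ 1/2, where Π_U denotes the orthogonal projection onto U. -/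
open MeasureTheory ProbabilityTheory Matrix

noncomputable section

namespace RSAux

lemma exists_perm_mapsTo {α : Type*} [DecidableEq α] [Fintype α] (S : Finset α) :
    ∀ T : Finset α, Disjoint S T → S.card = T.card →
    ∃ σ : Equiv.Perm α, (∀ i ∈ S, σ i ∈ T) ∧ (∀ i, i ∉ S → i ∉ T → σ i = i) := by
  classical
  induction S using Finset.induction with
  | empty => exact fun T _ _ => ⟨1, by simp, by simp⟩
  | @insert a S' ha ih =>
      intro T hdisj hcard
      have haS : a ∈ insert a S' := Finset.mem_insert_self a S'
      have haT : a ∉ T := Finset.disjoint_left.mp hdisj haS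
      have hTne : T.Nonempty := by
        rw [← Finset.card_pos, ← hcard]
        exact Finset.card_pos.mpr ⟨a, haS⟩
      obtain ⟨b, hb⟩ := hTne
      have hdisj' : Disjoint S' (T.erase b) :=
        hdisj.mono (Finset.subset_insert a S') (Finset.erase_subset b T)
      have hcard' : S'.card = (T.erase b).card := by
        rw [Finset.card_erase_of_mem hb, ← hcard, Finset.card_insert_of_notMem ha]
        omega
      obtain ⟨σ', h1, h2⟩ := ih _ hdisj' hcard'
      refine ⟨Equiv.swap a b * σ', ?_, ?_⟩
      · intro i hi
        rcases Finset.mem_insert.mp hi with rfl | hi'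
        · have hfix : σ' i = i := h2 i ha (fun hiT => haT (Finset.erase_subset b T hiT))
          simp [Equiv.Perm.mul_apply, hfix, hb]
        · have hmem := h1 i hi'
          have hne_b : σ' i ≠ b := (Finset.mem_erase.mp hmem).1
          have hmemT : σ' i ∈ T := Finset.erase_subset b T hmem
          have hne_a : σ' i ≠ a := fun h => haT (h ▸ hmemT)
          simpa [Equiv.Perm.mul_apply, Equiv.swap_apply_of_ne_of_ne hne_a hne_b] using hmemT
      · intro i hiS hiT
        have hiS' : i ∉ S' := fun h => hiS (Finset.mem_insert_of_mem h)
        have hiTe : i ∉ T.erase b := fun h => hiT (Finset.erase_subset b T h)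
        have hne_a : i ≠ a := fun h => hiS (h ▸ haS)
        have hne_b : i ≠ b := fun h => hiT (h ▸ hb)
        simp [Equiv.Perm.mul_apply, h2 i hiS' hiTe,
          Equiv.swap_apply_of_ne_of_ne hne_a hne_b]

variable {d : ℕ}

/-- permutation matrix with `(permMat σ *ᵥ y) i = y (σ i)`. -/
def permMat (σ : Equiv.Perm (Fin d)) : Matrix (Fin d) (Fin d) ℝ :=
  Matrix.of fun i j => if σ i = j then 1 else 0

lemma permMat_mulVec (σ : Equiv.Perm (Fin d)) (y : Fin d → ℝ) (i : Fin d) :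
    (permMat σ *ᵥ y) i = y (σ i) := by
  show (∑ j, (if σ i = j then (1:ℝ) else 0) * y j) = y (σ i)
  rw [Finset.sum_eq_single (σ i)]
  · simp
  · intro j _ hj
    simp [Ne.symm hj]
  · simp

lemma permMat_orth (σ : Equiv.Perm (Fin d)) : (permMat σ)ᵀ * permMat σ = 1 := by
  ext j k
  simp only [Matrix.mul_apply, Matrix.transpose_apply, Matrix.one_apply, permMat, Matrix.of_apply]
  rw [Finset.sum_eq_single (σ⁻¹ j)]
  · simp [Equiv.Perm.inv_def, eq_comm]
  · intro i _ hi
    have : σ i ≠ j := fun h => hi (by rw [← h]; simp)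
    simp [this]
  · simp

lemma dot_mulVec_orth {A : Matrix (Fin d) (Fin d) ℝ} (h : Aᵀ * A = 1) (z : Fin d → ℝ) :
    (A *ᵥ z) ⬝ᵥ (A *ᵥ z) = z ⬝ᵥ z := by
  rw [Matrix.dotProduct_mulVec, ← Matrix.mulVec_transpose, Matrix.mulVec_mulVec, h,
    Matrix.one_mulVec]

lemma measurable_mulVec (A : Matrix (Fin d) (Fin d) ℝ) :
    Measurable fun x : Fin d → ℝ => A *ᵥ x := by
  refine measurable_pi_lambda _ fun i => ?_
  show Measurable fun x : Fin d → ℝ => ∑ j, A i j * x j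
  exact Finset.measurable_sum _ fun j _ => measurable_const.mul (measurable_pi_apply j)

lemma measurable_dot : Measurable fun x : Fin d → ℝ => x ⬝ᵥ x := by
  show Measurable fun x : Fin d → ℝ => ∑ j, x j * x j
  exact Finset.measurable_sum _ fun j _ => (measurable_pi_apply j).mul (measurable_pi_apply j)

lemma measurePreserving_mulVec {A : Matrix (Fin d) (Fin d) ℝ} (h : Aᵀ * A = 1) :
    MeasurePreserving (fun x => A *ᵥ x) (volume : Measure (Fin d → ℝ)) volume := by
  have hdet2 : A.det * A.det = 1 := by
    have h' := congrArg Matrix.det h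
    rwa [Matrix.det_mul, Matrix.det_transpose, Matrix.det_one] at h'
  have hdet : A.det ≠ 0 := by
    intro h0; rw [h0, mul_zero] at hdet2; exact zero_ne_one hdet2
  have habs : |A.det⁻¹| = 1 := by
    rcases mul_self_eq_one_iff.mp hdet2 with h1 | h1 <;> rw [h1] <;> norm_num
  have hmap := Real.map_matrix_volume_pi_eq_smul_volume_pi hdet
  rw [habs, ENNReal.ofReal_one, one_smul] at hmap
  refine ⟨measurable_mulVec A, ?_⟩
  have heq : (fun x : Fin d → ℝ => A *ᵥ x) = ⇑(Matrix.toLin' A) := by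
    ext x i; rw [Matrix.toLin'_apply]
  rw [heq]; exact hmap

lemma core (M : Matrix (Fin d) (Fin d) ℝ) (hsym : Mᵀ = M) (hidem : M * M = M)
    (hrank : 2 * M.rank ≤ d) :
    ∃ G : Matrix (Fin d) (Fin d) ℝ, Gᵀ * G = 1 ∧
      ∀ x : Fin d → ℝ,
        (M *ᵥ (G *ᵥ x)) ⬝ᵥ (M *ᵥ (G *ᵥ x)) + (M *ᵥ x) ⬝ᵥ (M *ᵥ x) ≤ x ⬝ᵥ x := by
  classical
  have hH : M.IsHermitian := by
    rwa [Matrix.IsHermitian, Matrix.conjTranspose_eq_transpose_of_trivial]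
  set ev := hH.eigenvalues with hev
  set U : Matrix (Fin d) (Fin d) ℝ := (hH.eigenvectorUnitary : Matrix (Fin d) (Fin d) ℝ) with hU
  have hUU : Uᵀ * U = 1 := by
    have := Matrix.mem_unitaryGroup_iff'.mp (hH.eigenvectorUnitary).2
    rwa [Matrix.star_eq_conjTranspose, Matrix.conjTranspose_eq_transpose_of_trivial] at this
  have hUUt : U * Uᵀ = 1 := by
    have := Matrix.mem_unitaryGroup_iff.mp (hH.eigenvectorUnitary).2
    rwa [Matrix.star_eq_conjTranspose, Matrix.conjTranspose_eq_transpose_of_trivial] at this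
  have hspec : M = U * Matrix.diagonal ev * Uᵀ := by
    have h := hH.spectral_theorem
    rwa [Unitary.conjStarAlgAut_apply, Matrix.star_eq_conjTranspose, Matrix.conjTranspose_eq_transpose_of_trivial,
      show (RCLike.ofReal ∘ hH.eigenvalues : Fin d → ℝ) = ev from rfl] at h
  set D := Matrix.diagonal ev with hD
  have cancel : ∀ X Y : Matrix (Fin d) (Fin d) ℝ, (X * Uᵀ) * (U * Y) = X * Y := by
    intro X Y
    rw [Matrix.mul_assoc, ← Matrix.mul_assoc Uᵀ, hUU, Matrix.one_mul]
  have cancel2 : ∀ X Y Z : Matrix (Fin d) (Fin d) ℝ,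
      (X * Uᵀ) * (U * Y * Z) = (X * Y) * Z := by
    intro X Y Z
    rw [Matrix.mul_assoc U Y Z, cancel X (Y * Z), ← Matrix.mul_assoc]
  -- eigenvalues are 0 or 1
  have hDD : D * D = D := by
    have h1 : (U * D * Uᵀ) * (U * D * Uᵀ) = U * D * Uᵀ := by rw [← hspec]; exact hidem
    have h2 : U * (D * D) * Uᵀ = U * D * Uᵀ := by
      calc U * (D * D) * Uᵀ = (U * D) * (D * Uᵀ) := by simp only [Matrix.mul_assoc]
        _ = ((U * D) * Uᵀ) * (U * (D * Uᵀ)) := (cancel _ _).symm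
        _ = U * D * Uᵀ * (U * D * Uᵀ) := by simp only [Matrix.mul_assoc]
        _ = U * D * Uᵀ := h1
    have h3 := congrArg (fun A => Uᵀ * A * U) h2
    calc D * D = (Uᵀ * U) * (D * D) * (Uᵀ * U) := by rw [hUU]; simp [Matrix.mul_assoc]
      _ = Uᵀ * (U * (D * D) * Uᵀ) * U := by simp only [Matrix.mul_assoc]
      _ = Uᵀ * (U * D * Uᵀ) * U := by rw [h3]
      _ = (Uᵀ * U) * D * (Uᵀ * U) := by simp only [Matrix.mul_assoc]
      _ = D := by rw [hUU]; simp [Matrix.mul_assoc]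
  have hev01 : ∀ i, ev i = 0 ∨ ev i = 1 := by
    intro i
    have h4 : ev i * ev i = ev i := by
      have := congrFun (congrFun hDD i) i
      simpa [hD, Matrix.mul_apply, Matrix.diagonal] using this
    rcases mul_eq_zero.mp (show ev i * (ev i - 1) = 0 by
      rw [mul_sub, mul_one, h4, sub_self]) with h | h
    · exact Or.inl h
    · exact Or.inr (by linarith)
  set S : Finset (Fin d) := Finset.univ.filter fun i => ev i ≠ 0 with hS
  have hcardS : S.card = M.rank := by
    rw [hH.rank_eq_card_non_zero_eigs, Fintype.card_subtype]
  have hcardle : S.card ≤ Sᶜ.card := by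
    have h1 : Sᶜ.card = d - S.card := by
      rw [Finset.card_compl, Fintype.card_fin]
    have h2 : S.card ≤ d := by
      have := Finset.card_le_card (Finset.subset_univ S)
      simpa using this
    omega
  obtain ⟨T, hTsub, hTcard⟩ := Finset.exists_subset_card_eq hcardle
  have hdisjST : Disjoint S T :=
    Finset.disjoint_left.mpr fun i hiS hiT => (Finset.mem_compl.mp (hTsub hiT)) hiS
  obtain ⟨σ, hσ1, -⟩ := exists_perm_mapsTo S T hdisjST hTcard.symm
  set Pm := (permMat σ : Matrix (Fin d) (Fin d) ℝ) with hPm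
  refine ⟨U * Pm * Uᵀ, ?_, ?_⟩
  · have ht : (U * Pm * Uᵀ)ᵀ = U * Pmᵀ * Uᵀ := by
      simp [Matrix.transpose_mul, Matrix.mul_assoc]
    rw [ht, cancel2, Matrix.mul_assoc U Pmᵀ Pm, permMat_orth, Matrix.mul_one, hUUt]
  · intro x
    set y := Uᵀ *ᵥ x with hy
    have hUtU : (Uᵀ)ᵀ * Uᵀ = 1 := by rwa [Matrix.transpose_transpose]
    have hqx : x ⬝ᵥ x = y ⬝ᵥ y := (dot_mulVec_orth hUtU x).symm
    have hMx : M *ᵥ x = U *ᵥ (D *ᵥ y) := by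
      rw [hspec, ← Matrix.mulVec_mulVec, ← Matrix.mulVec_mulVec]
    have hMGx : M *ᵥ ((U * Pm * Uᵀ) *ᵥ x) = U *ᵥ (D *ᵥ (Pm *ᵥ y)) := by
      rw [Matrix.mulVec_mulVec, hspec, cancel2]
      simp only [← Matrix.mulVec_mulVec]
      rfl
    have hqD : ∀ z : Fin d → ℝ, (D *ᵥ z) ⬝ᵥ (D *ᵥ z) = ∑ i ∈ S, z i ^ 2 := by
      intro z
      have h5 : ∀ i, (D *ᵥ z) i = ev i * z i := by
        intro i; simp [hD, Matrix.mulVec_diagonal]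
      show (∑ i, (D *ᵥ z) i * (D *ᵥ z) i) = _
      rw [← Finset.sum_subset (Finset.subset_univ S)
        (fun i _ hi => by
          have h0 : ev i = 0 := by
            by_contra hne; exact hi (Finset.mem_filter.mpr ⟨Finset.mem_univ i, hne⟩)
          rw [h5, h0, zero_mul, zero_mul])]
      refine Finset.sum_congr rfl fun i hi => ?_
      have h1 : ev i = 1 := by
        rcases hev01 i with h | h
        · exact absurd h (Finset.mem_filter.mp hi).2
        · exact h
      rw [h5, h1, one_mul, sq]
    rw [hMGx, hMx, dot_mulVec_orth hUU, dot_mulVec_orth hUU, hqx, hqD, hqD]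
    have hPy : ∀ i, (Pm *ᵥ y) i = y (σ i) := permMat_mulVec σ y
    have himg : ∑ i ∈ S, (Pm *ᵥ y) i ^ 2 = ∑ j ∈ S.image σ, y j ^ 2 := by
      rw [Finset.sum_image (fun i _ j _ h => σ.injective h)]
      exact Finset.sum_congr rfl fun i _ => by rw [hPy]
    have himg2 : ∑ j ∈ S.image σ, y j ^ 2 ≤ ∑ j ∈ Sᶜ, y j ^ 2 := by
      refine Finset.sum_le_sum_of_subset_of_nonneg ?_ fun j _ _ => sq_nonneg _
      intro j hj
      obtain ⟨i, hi, rfl⟩ := Finset.mem_image.mp hj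
      exact hTsub (hσ1 i hi)
    have hsplit : ∑ i ∈ S, y i ^ 2 + ∑ i ∈ Sᶜ, y i ^ 2 = ∑ i, y i ^ 2 := by
      rw [Finset.sum_add_sum_compl]
    have hyy : y ⬝ᵥ y = ∑ i, y i ^ 2 := by
      show (∑ i, y i * y i) = _
      exact Finset.sum_congr rfl fun i _ => (sq (y i)).symm
    rw [hyy]
    calc ∑ i ∈ S, (Pm *ᵥ y) i ^ 2 + ∑ i ∈ S, y i ^ 2
        ≤ ∑ j ∈ Sᶜ, y j ^ 2 + ∑ i ∈ S, y i ^ 2 := by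
          rw [himg]; exact add_le_add_left himg2 _
      _ = ∑ i, y i ^ 2 := by rw [add_comm, hsplit]

def ballSet (d : ℕ) : Set (Fin d → ℝ) := {x | x ⬝ᵥ x < 1}

lemma ballSet_measurable : MeasurableSet (ballSet d) :=
  measurableSet_lt measurable_dot measurable_const

lemma ballSet_lt_top : volume (ballSet d) < ⊤ := by
  have hsub : ballSet d ⊆ Set.pi Set.univ fun _ : Fin d => Set.Icc (-1:ℝ) 1 := by
    intro x hx
    intro i _
    have h1 : x i * x i ≤ x ⬝ᵥ x := by
      show x i * x i ≤ ∑ j, x j * x j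
      exact Finset.single_le_sum (f := fun j => x j * x j)
        (fun j _ => mul_self_nonneg _) (Finset.mem_univ i)
    have h2 : x i * x i ≤ 1 := le_trans h1 (le_of_lt hx)
    have := abs_le_one_iff_mul_self_le_one.mpr h2
    exact abs_le.mp this
  calc volume (ballSet d) ≤ volume (Set.pi Set.univ fun _ : Fin d => Set.Icc (-1:ℝ) 1) :=
        measure_mono hsub
    _ = ∏ _i : Fin d, volume (Set.Icc (-1:ℝ) 1) := volume_pi_pi _
    _ < ⊤ := by
        rw [Real.volume_Icc, Finset.prod_const]
        exact ENNReal.pow_lt_top ENNReal.ofReal_lt_top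

lemma ballSet_pos (hd : 0 < d) : 0 < volume (ballSet d) := by
  have hsub : (Set.pi Set.univ fun _ : Fin d => Set.Ioo (-(1/(d:ℝ))) (1/(d:ℝ))) ⊆ ballSet d := by
    intro x hx
    have hd1 : (1:ℝ) ≤ d := Nat.one_le_cast.mpr hd
    have hdpos : (0:ℝ) < d := lt_of_lt_of_le one_pos hd1
    have hterm : ∀ i : Fin d, x i * x i < (1/(d:ℝ))^2 := by
      intro i
      have hxi := hx i (Set.mem_univ i)
      have habs : |x i| < 1/(d:ℝ) := abs_lt.mpr ⟨hxi.1, hxi.2⟩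
      calc x i * x i = |x i| * |x i| := (abs_mul_abs_self _).symm
        _ < (1/(d:ℝ)) * (1/(d:ℝ)) :=
            mul_lt_mul'' habs habs (abs_nonneg _) (abs_nonneg _)
        _ = (1/(d:ℝ))^2 := (sq _).symm
    show x ⬝ᵥ x < 1
    calc x ⬝ᵥ x = ∑ j, x j * x j := rfl
      _ < ∑ _j : Fin d, (1/(d:ℝ))^2 :=
          Finset.sum_lt_sum_of_nonempty (Finset.univ_nonempty_iff.mpr ⟨⟨0, hd⟩⟩)
            (fun j _ => hterm j)
      _ = d * (1/(d:ℝ))^2 := by rw [Finset.sum_const, Finset.card_univ, Fintype.card_fin,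
            nsmul_eq_mul]
      _ = 1/(d:ℝ) := by field_simp
      _ ≤ 1 := by rw [div_le_one hdpos]; exact hd1
  have : 0 < volume (Set.pi Set.univ fun _ : Fin d => Set.Ioo (-(1/(d:ℝ))) (1/(d:ℝ))) := by
    rw [volume_pi_pi]
    rw [Real.volume_Ioo, Finset.prod_const]
    apply ENNReal.pow_pos
    rw [ENNReal.ofReal_pos]
    have hdpos : (0:ℝ) < d := by exact_mod_cast hd
    rw [sub_neg_eq_add]
    positivity
  exact lt_of_lt_of_le this (measure_mono hsub)

lemma good_half (M : Matrix (Fin d) (Fin d) ℝ) (hsym : Mᵀ = M)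
    (hidem : M * M = M) (hrank : 2 * M.rank ≤ d) :
    volume (ballSet d) / 2 ≤
      (volume.restrict (ballSet d)) {x | 2 * ((M *ᵥ x) ⬝ᵥ (M *ᵥ x)) ≤ x ⬝ᵥ x} := by
  obtain ⟨G, hG, hGle⟩ := core M hsym hidem hrank
  set ν := volume.restrict (ballSet d) with hν
  set Gd : Set (Fin d → ℝ) := {x | 2 * ((M *ᵥ x) ⬝ᵥ (M *ᵥ x)) ≤ x ⬝ᵥ x} with hGd
  have hGdm : MeasurableSet Gd :=
    measurableSet_le (measurable_const.mul (measurable_dot.comp (measurable_mulVec M)))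
      measurable_dot
  have hpre : (fun x => G *ᵥ x) ⁻¹' ballSet d = ballSet d := by
    ext x
    simp only [Set.mem_preimage, ballSet, Set.mem_setOf_eq, dot_mulVec_orth hG]
  have mp : MeasurePreserving (fun x => G *ᵥ x) ν ν := by
    have h1 := (measurePreserving_mulVec hG).restrict_preimage
      (s := ballSet d) ballSet_measurable
    rwa [hpre] at h1
  have hsub : Gdᶜ ⊆ (fun x => G *ᵥ x) ⁻¹' Gd := by
    intro x hx
    simp only [Set.mem_compl_iff, hGd, Set.mem_setOf_eq, not_le] at hx
    have h1 := hGle x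
    have h2 := dot_mulVec_orth hG x
    show 2 * ((M *ᵥ (G *ᵥ x)) ⬝ᵥ (M *ᵥ (G *ᵥ x))) ≤ (G *ᵥ x) ⬝ᵥ (G *ᵥ x)
    rw [h2]
    linarith
  have hle : ν Gdᶜ ≤ ν Gd := by
    calc ν Gdᶜ ≤ ν ((fun x => G *ᵥ x) ⁻¹' Gd) := measure_mono hsub
      _ = ν Gd := mp.measure_preimage hGdm.nullMeasurableSet
  have htot : ν Gd + ν Gdᶜ = volume (ballSet d) := by
    rw [measure_add_measure_compl hGdm, hν, Measure.restrict_apply_univ]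
  have h2 : volume (ballSet d) ≤ 2 * ν Gd := by
    rw [← htot, two_mul]
    exact add_le_add_right hle _
  calc volume (ballSet d) / 2 ≤ 2 * ν Gd / 2 := ENNReal.div_le_div_right h2 _
    _ = ν Gd := by
        rw [mul_comm, mul_div_assoc, ENNReal.div_self (by norm_num) (by norm_num),
          mul_one]

end RSAux

open RSAux

/-- Let `U` be a random linear subspace of `ℝ^d`, given by a measurable family of orthogonal
projection matrices `ω ↦ Π(ω)` (symmetric idempotent matrices), satisfying
`dim U = rank Π ≤ d/2` almost surely. Then there exists a deterministic `θ⋆` on the Euclidean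
unit sphere such that `P(‖Π_U θ⋆‖² ≤ 1/2) ≥ 1/2`. -/
theorem random_subspace_bad_direction
    (d : ℕ) (hd : 0 < d)
    (Ω : Type) (_ : MeasurableSpace Ω) (P : Measure Ω) (hP : IsProbabilityMeasure P)
    (Pi : Ω → Matrix (Fin d) (Fin d) ℝ) (hmeas : ∀ i j, Measurable fun ω => Pi ω i j)
    (hproj : ∀ᵐ ω ∂P, (Pi ω)ᵀ = Pi ω ∧ Pi ω * Pi ω = Pi ω)
    (hrank : ∀ᵐ ω ∂P, 2 * (Pi ω).rank ≤ d) :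
    ∃ θ : Fin d → ℝ, euclNorm θ = 1 ∧
      (1 / 2 : ENNReal) ≤ P {ω | euclNorm (Pi ω *ᵥ θ) ^ 2 ≤ 1 / 2} := by
  classical
  set B := ballSet d with hB
  set ν := volume.restrict B with hν
  have hνuniv : ν Set.univ = volume B := by rw [hν, Measure.restrict_apply_univ]
  haveI : IsFiniteMeasure ν := ⟨by rw [hνuniv]; exact ballSet_lt_top⟩
  -- joint measurability
  have hq : Measurable fun p : Ω × (Fin d → ℝ) => (Pi p.1 *ᵥ p.2) ⬝ᵥ (Pi p.1 *ᵥ p.2) := by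
    have h1 : ∀ i : Fin d, Measurable fun p : Ω × (Fin d → ℝ) => (Pi p.1 *ᵥ p.2) i := by
      intro i
      show Measurable fun p : Ω × (Fin d → ℝ) => ∑ j, Pi p.1 i j * p.2 j
      exact Finset.measurable_sum _ fun j _ =>
        ((hmeas i j).comp measurable_fst).mul ((measurable_pi_apply j).comp measurable_snd)
    show Measurable fun p : Ω × (Fin d → ℝ) => ∑ i, (Pi p.1 *ᵥ p.2) i * (Pi p.1 *ᵥ p.2) i
    exact Finset.measurable_sum _ fun i _ => (h1 i).mul (h1 i)
  have hq2 : Measurable fun p : Ω × (Fin d → ℝ) => p.2 ⬝ᵥ p.2 :=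
    measurable_dot.comp measurable_snd
  set E : Set (Ω × (Fin d → ℝ)) :=
    {p | 2 * ((Pi p.1 *ᵥ p.2) ⬝ᵥ (Pi p.1 *ᵥ p.2)) ≤ p.2 ⬝ᵥ p.2} with hE
  have hEm : MeasurableSet E := measurableSet_le (measurable_const.mul hq) hq2
  have h1 : volume B / 2 ≤ (P.prod ν) E := by
    rw [Measure.prod_apply hEm]
    have hae : ∀ᵐ ω ∂P, volume B / 2 ≤ ν (Prod.mk ω ⁻¹' E) := by
      filter_upwards [hproj, hrank] with ω hω hr
      exact good_half (Pi ω) hω.1 hω.2 hr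
    calc volume B / 2 = ∫⁻ _, volume B / 2 ∂P := by
          rw [lintegral_const, measure_univ, mul_one]
      _ ≤ ∫⁻ ω, ν (Prod.mk ω ⁻¹' E) ∂P := lintegral_mono_ae hae
  have h2 : (P.prod ν) E = ∫⁻ x, P {ω | (ω, x) ∈ E} ∂ν :=
    Measure.prod_apply_symm hEm
  -- find a good nonzero x
  have key : ∃ x : Fin d → ℝ, x ≠ 0 ∧ (1 / 2 : ENNReal) ≤ P {ω | (ω, x) ∈ E} := by
    by_contra hcon
    push_neg at hcon
    haveI : Nonempty (Fin d) := ⟨⟨0, hd⟩⟩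
    have h0 : ν {(0 : Fin d → ℝ)} = 0 := by
      rw [hν, Measure.restrict_apply (measurableSet_singleton _)]
      exact measure_mono_null Set.inter_subset_left (measure_singleton _)
    have hae : ∀ᵐ x ∂ν, P {ω | (ω, x) ∈ E} < 1 / 2 := by
      rw [ae_iff]
      refine measure_mono_null ?_ h0
      intro x hx
      simp only [Set.mem_setOf_eq, not_lt] at hx
      by_contra hx0
      exact absurd hx (not_le.mpr (hcon x (by simpa using hx0)))
    have hν0 : ν ≠ 0 := by
      intro h
      rw [h] at hνuniv
      exact absurd hνuniv.symm (ne_of_gt (by simpa using ballSet_pos hd))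
    have hfi : ∫⁻ x, P {ω | (ω, x) ∈ E} ∂ν ≠ ⊤ := by
      refine ne_of_lt (lt_of_le_of_lt ?_ (lt_of_le_of_lt (le_of_eq hνuniv) ballSet_lt_top))
      calc ∫⁻ x, P {ω | (ω, x) ∈ E} ∂ν ≤ ∫⁻ _, 1 ∂ν :=
            lintegral_mono fun x => prob_le_one
        _ = ν Set.univ := by rw [lintegral_const, one_mul]
    have hlt := lintegral_strict_mono hν0 measurable_const.aemeasurable hfi hae
    rw [lintegral_const] at hlt
    have hcontr : volume B / 2 ≤ ∫⁻ x, P {ω | (ω, x) ∈ E} ∂ν := h2 ▸ h1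
    have : (1 / 2 : ENNReal) * ν Set.univ = volume B / 2 := by
      rw [hνuniv, one_div, mul_comm, div_eq_mul_inv]
    rw [this] at hlt
    exact absurd hcontr (not_le.mpr hlt)
  obtain ⟨x, hx0, hxP⟩ := key
  -- normalize
  have hdotnn : ∀ v : Fin d → ℝ, 0 ≤ v ⬝ᵥ v := fun v =>
    Finset.sum_nonneg fun i _ => mul_self_nonneg _
  have hqpos : 0 < x ⬝ᵥ x :=
    lt_of_le_of_ne (hdotnn x) fun h => hx0 (dotProduct_self_eq_zero.mp h.symm)
  set n := Real.sqrt (x ⬝ᵥ x) with hn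
  have hnpos : 0 < n := Real.sqrt_pos.mpr hqpos
  have hnn : n * n = x ⬝ᵥ x := Real.mul_self_sqrt (le_of_lt hqpos)
  refine ⟨n⁻¹ • x, ?_, ?_⟩
  · show Real.sqrt ((n⁻¹ • x) ⬝ᵥ (n⁻¹ • x)) = 1
    rw [smul_dotProduct, dotProduct_smul, smul_eq_mul, smul_eq_mul, ← mul_assoc,
      ← mul_inv, hnn, inv_mul_cancel₀ (ne_of_gt hqpos), Real.sqrt_one]
  · refine le_trans hxP (measure_mono ?_)
    intro ω hω
    have hω' : 2 * ((Pi ω *ᵥ x) ⬝ᵥ (Pi ω *ᵥ x)) ≤ x ⬝ᵥ x := hω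
    show euclNorm (Pi ω *ᵥ (n⁻¹ • x)) ^ 2 ≤ 1 / 2
    rw [Matrix.mulVec_smul]
    set w := Pi ω *ᵥ x with hw
    have he : euclNorm (n⁻¹ • w) ^ 2 = (n⁻¹ • w) ⬝ᵥ (n⁻¹ • w) :=
      Real.sq_sqrt (hdotnn _)
    rw [he, smul_dotProduct, dotProduct_smul, smul_eq_mul, smul_eq_mul,
      ← mul_assoc, ← mul_inv, hnn]
    have h3 : w ⬝ᵥ w ≤ (x ⬝ᵥ x) / 2 := by linarith
    calc (x ⬝ᵥ x)⁻¹ * (w ⬝ᵥ w) ≤ (x ⬝ᵥ x)⁻¹ * ((x ⬝ᵥ x) / 2) :=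
          mul_le_mul_of_nonneg_left h3 (inv_nonneg.mpr (hdotnn x))
      _ = 1 / 2 := by field_simp


end
end
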